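/- Let β₁, β₂ be real numbers with β₂ > 0, and let λ be a real number with 0 < λ < 1. Then ∫_λ^1 x^{−(β₁+β₂−1/2)} (1−x)^{β₂−1} (x−λ)^{β₂−1} dx = (1−λ)^{2β₂−1} · Γ(β₂)² / Γ(2β₂) · ₂F₁(β₁+β₂−1/2, β₂; 2β₂; 1−λ). (This evaluates the period integral of dx/y over the line segment [λ, 1] for the superelliptic curve y^{2r} = x^{p+q−r}(x−1)^{2r−p}(x−λ)^{2r−p} with β₁ = q/(2r), β₂ = p/(2r), up to a constant phase.) -/

import Mathlib

open MeasureTheory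

/-- Pochhammer symbol `(x)_n` in `ℝ`. -/
noncomputable def rpoch (x : ℝ) (n : ℕ) : ℝ := (ascPochhammer ℝ n).eval x

open Filter
section Aux

lemma rpoch_zero (x : ℝ) : rpoch x 0 = 1 := by simp [rpoch]

lemma rpoch_succ (x : ℝ) (n : ℕ) : rpoch x (n+1) = rpoch x n * (x + n) := by
  simp [rpoch, ascPochhammer_succ_right]

lemma rpoch_pos {x : ℝ} (hx : 0 < x) (n : ℕ) : 0 < rpoch x n := by
  induction n with
  | zero => simp [rpoch_zero]
  | succ n ih => rw [rpoch_succ]; positivity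

lemma rpoch_le {x y : ℝ} (hx : 0 < x) (hxy : x ≤ y) (n : ℕ) : rpoch x n ≤ rpoch y n := by
  induction n with
  | zero => simp [rpoch_zero]
  | succ n ih =>
      rw [rpoch_succ, rpoch_succ]
      have h1 := rpoch_pos hx n
      have h2 : (0:ℝ) ≤ x + n := by positivity
      exact mul_le_mul ih (by linarith) h2 (le_trans h1.le ih)

lemma Gamma_add_nat {x : ℝ} (hx : 0 < x) (n : ℕ) :
    Real.Gamma (x + n) = rpoch x n * Real.Gamma x := by
  induction n with
  | zero => simp [rpoch_zero]
  | succ n ih =>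
      have hxn : x + (n:ℝ) ≠ 0 := by positivity
      have : x + ((n:ℕ)+1:ℕ) = (x + n) + 1 := by push_cast; ring
      rw [this, Real.Gamma_add_one hxn, ih, rpoch_succ]; ring

lemma rpoch_cast (a : ℝ) (n : ℕ) :
    ((rpoch a n : ℝ) : ℂ) = (ascPochhammer ℂ n).eval ((a : ℝ) : ℂ) := by
  rw [rpoch, ← ascPochhammer_map (algebraMap ℝ ℂ), Polynomial.eval_map,
    show ((a:ℝ):ℂ) = algebraMap ℝ ℂ a from rfl, Polynomial.eval₂_at_apply]
  rfl

lemma beta_ofReal (u v : ℝ) (t : ℝ) (ht : t ∈ Set.Ioo (0:ℝ) 1) :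
    (t:ℂ) ^ ((u:ℂ) - 1) * (1 - (t:ℂ)) ^ ((v:ℂ) - 1)
      = ((t ^ (u-1) * (1-t) ^ (v-1) : ℝ) : ℂ) := by
  rw [Complex.ofReal_mul, Complex.ofReal_cpow ht.1.le,
    Complex.ofReal_cpow (by linarith [ht.2] : (0:ℝ) ≤ 1 - t)]
  push_cast
  ring

lemma betaIntegrable {u v : ℝ} (hu : 0 < u) (hv : 0 < v) :
    IntegrableOn (fun t : ℝ => t ^ (u-1) * (1-t) ^ (v-1)) (Set.Ioo 0 1) := by
  have hc : IntervalIntegrable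
      (fun x : ℝ => (x:ℂ) ^ ((u:ℂ)-1) * (1-(x:ℂ)) ^ ((v:ℂ)-1)) volume 0 1 :=
    Complex.betaIntegral_convergent (by simpa using hu) (by simpa using hv)
  have h1 : IntegrableOn (fun x : ℝ => (x:ℂ) ^ ((u:ℂ)-1) * (1-(x:ℂ)) ^ ((v:ℂ)-1))
      (Set.Ioo 0 1) :=
    ((intervalIntegrable_iff_integrableOn_Ioc_of_le zero_le_one).mp hc).mono_set
      Set.Ioo_subset_Ioc_self
  refine h1.re.congr ?_
  refine (ae_restrict_iff' measurableSet_Ioo).2 (ae_of_all _ fun t ht => ?_)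
  simp only [RCLike.re_to_complex]
  rw [beta_ofReal u v t ht, Complex.ofReal_re]

lemma betaIntegral_eval {u v : ℝ} (hu : 0 < u) (hv : 0 < v) :
    ∫ t in Set.Ioo (0:ℝ) 1, t ^ (u-1) * (1-t) ^ (v-1)
      = Real.Gamma u * Real.Gamma v / Real.Gamma (u+v) := by
  have key := Complex.Gamma_mul_Gamma_eq_betaIntegral
    (s := (u:ℂ)) (t := (v:ℂ)) (by simpa using hu) (by simpa using hv)
  have hbeta : Complex.betaIntegral (u:ℂ) (v:ℂ)
      = ((∫ t in Set.Ioo (0:ℝ) 1, t ^ (u-1) * (1-t) ^ (v-1) : ℝ) : ℂ) := by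
    rw [Complex.betaIntegral, intervalIntegral.integral_of_le zero_le_one,
      integral_Ioc_eq_integral_Ioo]
    rw [show ((∫ t in Set.Ioo (0:ℝ) 1, t ^ (u-1) * (1-t) ^ (v-1) : ℝ) : ℂ)
        = ∫ t in Set.Ioo (0:ℝ) 1, ((t ^ (u-1) * (1-t) ^ (v-1) : ℝ) : ℂ) from
      (integral_ofReal (𝕜 := ℂ)).symm]
    exact setIntegral_congr_fun measurableSet_Ioo fun t ht => beta_ofReal u v t ht
  have hGsum : Real.Gamma (u+v) ≠ 0 := (Real.Gamma_pos_of_pos (by linarith)).ne'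
  rw [hbeta, ← Complex.ofReal_add, Complex.Gamma_ofReal, Complex.Gamma_ofReal,
    Complex.Gamma_ofReal] at key
  have hr : Real.Gamma u * Real.Gamma v
      = Real.Gamma (u+v) * ∫ t in Set.Ioo (0:ℝ) 1, t ^ (u-1) * (1-t) ^ (v-1) := by
    exact_mod_cast key
  rw [eq_div_iff hGsum]
  linarith [hr]

lemma slit_of_ball {s : ℂ} (hs : s ∈ Metric.ball (0:ℂ) 1) :
    (1 - s) ∈ Complex.slitPlane := by
  rw [Complex.mem_slitPlane_iff]
  left
  have h1 : ‖s‖ < 1 := by simpa [Metric.mem_ball, Complex.dist_eq] using hs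
  have h2 : s.re < 1 :=
    lt_of_le_of_lt (le_trans (le_abs_self _) (Complex.abs_re_le_norm s)) h1
  simp only [Complex.sub_re, Complex.one_re]
  linarith

lemma hasDerivAt_onemz_cpow (c : ℂ) {s : ℂ} (h : (1 - s) ∈ Complex.slitPlane) :
    HasDerivAt (fun z : ℂ => (1 - z) ^ c) (-c * (1 - s) ^ (c - 1)) s := by
  have h1 : HasDerivAt (fun z : ℂ => 1 - z) (-1) s := by
    simpa using (hasDerivAt_id s).const_sub 1
  have h2 := h1.cpow_const (c := c) h
  convert h2 using 1
  ring

lemma iteratedDeriv_onemz_cpow (a : ℝ) (n : ℕ) {s : ℂ} (hs : s ∈ Metric.ball (0:ℂ) 1) :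
    iteratedDeriv n (fun z : ℂ => (1 - z) ^ (-(a:ℂ))) s
      = (ascPochhammer ℂ n).eval ((a:ℝ):ℂ) * (1 - s) ^ (-(a:ℂ) - n) := by
  induction n generalizing s with
  | zero => simp
  | succ n ih =>
      rw [iteratedDeriv_succ]
      have hev : (iteratedDeriv n (fun z : ℂ => (1 - z) ^ (-(a:ℂ))))
          =ᶠ[nhds s]
          (fun z => (ascPochhammer ℂ n).eval ((a:ℝ):ℂ) * (1 - z) ^ (-(a:ℂ) - n)) :=
        Filter.eventuallyEq_of_mem (Metric.isOpen_ball.mem_nhds hs) (fun z hz => ih hz)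
      rw [hev.deriv_eq]
      have hd := HasDerivAt.const_mul ((ascPochhammer ℂ n).eval ((a:ℝ):ℂ))
        (hasDerivAt_onemz_cpow (-(a:ℂ) - n) (slit_of_ball hs))
      rw [hd.deriv, ascPochhammer_succ_right]
      simp only [Polynomial.eval_mul, Polynomial.eval_add, Polynomial.eval_X,
        Polynomial.eval_natCast]
      rw [show (-(a:ℂ) - ((n+1 : ℕ):ℂ)) = -(a:ℂ) - n - 1 by push_cast; ring]
      ring

lemma binomial_hasSum (a : ℝ) {w : ℝ} (hw : |w| < 1) :
    HasSum (fun n : ℕ => rpoch a n / n.factorial * w ^ n) ((1 - w) ^ (-a)) := by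
  have hball : (w:ℂ) ∈ Metric.ball (0:ℂ) 1 := by
    simpa [Metric.mem_ball, Complex.dist_eq] using hw
  have hdiff : DifferentiableOn ℂ (fun z : ℂ => (1 - z) ^ (-(a:ℂ)))
      (Metric.ball (0:ℂ) 1) := fun s hs =>
    ((hasDerivAt_onemz_cpow (-(a:ℂ)) (slit_of_ball hs)).differentiableAt).differentiableWithinAt
  have H := Complex.hasSum_taylorSeries_on_ball hdiff hball
  have hw1 : (0:ℝ) ≤ 1 - w := by have := abs_lt.mp hw; linarith [this.2]
  have H2 : HasSum (fun n : ℕ => ((rpoch a n / n.factorial * w ^ n : ℝ) : ℂ))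
      (((1 - w) ^ (-a) : ℝ) : ℂ) := by
    convert H using 2 with n
    · rfl
    · rw [iteratedDeriv_onemz_cpow a n (Metric.mem_ball_self one_pos)]
      simp only [sub_zero, smul_eq_mul]
      rw [Complex.one_cpow, ← rpoch_cast]
      push_cast
      ring
    · rw [show ((1:ℂ) - (w:ℂ)) = ((1 - w : ℝ) : ℂ) by push_cast; ring,
        show (-(a:ℂ)) = ((-a : ℝ):ℂ) by push_cast; ring, ← Complex.ofReal_cpow hw1]
  exact Complex.hasSum_ofReal.mp H2

lemma coeff_summable (a : ℝ) {z : ℝ} (h0 : 0 ≤ z) (h1 : z < 1) :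
    Summable (fun n : ℕ => |rpoch a n| / n.factorial * z ^ n) := by
  rcases eq_or_lt_of_le h0 with hz | hz
  · apply summable_of_ne_finset_zero (s := {0})
    intro n hn
    have hn0 : n ≠ 0 := by simpa using hn
    simp [← hz, zero_pow hn0]
  · set r := (1+z)/2 with hr
    have hr1 : r < 1 := by rw [hr]; linarith
    apply summable_of_ratio_norm_eventually_le hr1
    filter_upwards [eventually_ge_atTop ⌈2*|a|/(1-z)⌉₊] with n hn
    have hn' : 2*|a|/(1-z) ≤ (n:ℝ) := le_trans (Nat.le_ceil _) (by exact_mod_cast hn)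
    have hz1 : (0:ℝ) < 1 - z := by linarith
    have hn2 : 2*|a| ≤ (n:ℝ) * (1-z) := by
      rw [div_le_iff₀ hz1] at hn'; linarith
    have key : |a + (n:ℝ)| * z ≤ r * ((n:ℝ)+1) := by
      have h2 : |a + (n:ℝ)| ≤ |a| + n := (abs_add_le _ _).trans (by simp)
      have ha : (0:ℝ) ≤ |a| := abs_nonneg a
      have hzn : (0:ℝ) ≤ (n:ℝ) := Nat.cast_nonneg n
      rw [hr]
      nlinarith
    have hq : (0:ℝ) ≤ |rpoch a n| / n.factorial * z ^ n := by
      exact mul_nonneg (by positivity) (pow_nonneg h0 _)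
    rw [Real.norm_of_nonneg (mul_nonneg (by positivity) (pow_nonneg h0 _)),
      Real.norm_of_nonneg hq]
    have heq : |rpoch a (n+1)| / (n+1).factorial * z ^ (n+1)
        = (|rpoch a n| / n.factorial * z ^ n) * (|a + (n:ℝ)| * z / ((n:ℝ)+1)) := by
      rw [rpoch_succ, abs_mul, Nat.factorial_succ, pow_succ]
      have hfact : ((n.factorial : ℝ)) ≠ 0 := by positivity
      have hn1 : ((n:ℝ)+1) ≠ 0 := by positivity
      push_cast
      field_simp
    rw [heq]
    have hle : |a + (n:ℝ)| * z / ((n:ℝ)+1) ≤ r := by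
      rw [div_le_iff₀ (by positivity)]
      linarith [key]
    calc (|rpoch a n| / n.factorial * z ^ n) * (|a + (n:ℝ)| * z / ((n:ℝ)+1))
        ≤ (|rpoch a n| / n.factorial * z ^ n) * r := mul_le_mul_of_nonneg_left hle hq
      _ = r * (|rpoch a n| / n.factorial * z ^ n) := mul_comm _ _

lemma J_eval (a b z : ℝ) (hb : 0 < b) (hz0 : 0 < z) (hz1 : z < 1) :
    ∫ t in Set.Ioo (0:ℝ) 1, (1 - z*t) ^ (-a) * (t ^ (b-1) * (1-t) ^ (b-1))
      = (∑' n : ℕ, rpoch a n * rpoch b n / (rpoch (2*b) n * n.factorial) * z ^ n)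
          * (Real.Gamma b ^ 2 / Real.Gamma (2*b)) := by
  set F : ℕ → ℝ → ℝ := fun n t =>
    rpoch a n / n.factorial * z ^ n * (t ^ ((n:ℝ) + b - 1) * (1-t) ^ (b-1)) with hF
  have hpt : ∀ t ∈ Set.Ioo (0:ℝ) 1,
      HasSum (fun n => F n t) ((1 - z*t) ^ (-a) * (t ^ (b-1) * (1-t) ^ (b-1))) := by
    intro t ht
    have hzt : 0 < z * t := mul_pos hz0 ht.1
    have hzt1 : z * t < 1 := by nlinarith [ht.2]
    have hw : |z * t| < 1 := by rw [abs_of_pos hzt]; exact hzt1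
    have H := (binomial_hasSum a hw).mul_right (t ^ (b-1) * (1-t) ^ (b-1))
    have hfun : (fun n : ℕ => rpoch a n / n.factorial * (z*t) ^ n
        * (t ^ (b-1) * (1-t) ^ (b-1))) = fun n => F n t := by
      funext n
      simp only [hF]
      rw [show (n:ℝ) + b - 1 = (n:ℝ) + (b-1) by ring, Real.rpow_add ht.1,
        Real.rpow_natCast, mul_pow]
      ring
    rwa [hfun] at H
  have hint : ∀ n : ℕ, IntegrableOn (F n) (Set.Ioo (0:ℝ) 1) := by
    intro n
    have hu : (0:ℝ) < (n:ℝ) + b := by positivity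
    exact (betaIntegrable hu hb).const_mul _
  have hval : ∀ n : ℕ, ∫ t in Set.Ioo (0:ℝ) 1, F n t
      = rpoch a n / n.factorial * z ^ n
        * (Real.Gamma ((n:ℝ)+b) * Real.Gamma b / Real.Gamma ((n:ℝ)+b+b)) := by
    intro n
    have hu : (0:ℝ) < (n:ℝ) + b := by positivity
    simp only [hF]
    rw [MeasureTheory.integral_const_mul, betaIntegral_eval hu hb]
  have hnorm : ∀ n : ℕ, ∫ t in Set.Ioo (0:ℝ) 1, ‖F n t‖
      = |rpoch a n| / n.factorial * z ^ n
        * (Real.Gamma ((n:ℝ)+b) * Real.Gamma b / Real.Gamma ((n:ℝ)+b+b)) := by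
    intro n
    have hu : (0:ℝ) < (n:ℝ) + b := by positivity
    have hcong : ∀ t ∈ Set.Ioo (0:ℝ) 1, ‖F n t‖
        = |rpoch a n| / n.factorial * z ^ n * (t ^ ((n:ℝ) + b - 1) * (1-t) ^ (b-1)) := by
      intro t ht
      have h1 : (0:ℝ) ≤ t ^ ((n:ℝ) + b - 1) * (1-t) ^ (b-1) :=
        mul_nonneg (Real.rpow_nonneg ht.1.le _) (Real.rpow_nonneg (by linarith [ht.2]) _)
      rw [hF, Real.norm_eq_abs, abs_mul, abs_of_nonneg h1, abs_mul, abs_div,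
        abs_of_pos (by positivity : (0:ℝ) < (n.factorial:ℝ)),
        abs_of_nonneg (pow_nonneg hz0.le n)]
    rw [setIntegral_congr_fun measurableSet_Ioo hcong, MeasureTheory.integral_const_mul,
      betaIntegral_eval hu hb]
  -- rewrite Gammas via Pochhammer
  have hG : ∀ n : ℕ, Real.Gamma ((n:ℝ)+b) * Real.Gamma b / Real.Gamma ((n:ℝ)+b+b)
      = rpoch b n * Real.Gamma b * Real.Gamma b / (rpoch (2*b) n * Real.Gamma (2*b)) := by
    intro n
    rw [show (n:ℝ) + b = b + (n:ℕ) by push_cast; ring, Gamma_add_nat hb,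
      show b + (n:ℕ) + b = 2*b + (n:ℕ) by push_cast; ring,
      Gamma_add_nat (by linarith : (0:ℝ) < 2*b)]
  have hC : (0:ℝ) ≤ Real.Gamma b * Real.Gamma b / Real.Gamma (2*b) := by
    have := Real.Gamma_pos_of_pos hb
    have := Real.Gamma_pos_of_pos (by linarith : (0:ℝ) < 2*b)
    positivity
  have hsum : Summable (fun n : ℕ => ∫ t in Set.Ioo (0:ℝ) 1, ‖F n t‖) := by
    apply Summable.of_nonneg_of_le
      (fun n => by
        rw [hnorm n]
        have h1 := Real.Gamma_pos_of_pos (by positivity : (0:ℝ) < (n:ℝ) + b)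
        have h2 := Real.Gamma_pos_of_pos hb
        have h3 := Real.Gamma_pos_of_pos (by positivity : (0:ℝ) < (n:ℝ) + b + b)
        have h4 : (0:ℝ) ≤ z ^ n := pow_nonneg hz0.le n
        positivity)
      (fun n => ?_) (((coeff_summable a hz0.le hz1)).mul_right
        (Real.Gamma b * Real.Gamma b / Real.Gamma (2*b)))
    rw [hnorm n, hG n]
    have hpb := rpoch_pos hb n
    have hp2 := rpoch_pos (by linarith : (0:ℝ) < 2*b) n
    have hGb := Real.Gamma_pos_of_pos hb
    have hG2 := Real.Gamma_pos_of_pos (by linarith : (0:ℝ) < 2*b)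
    have hmono : rpoch b n ≤ rpoch (2*b) n := rpoch_le hb (by linarith) n
    have hB : rpoch b n * Real.Gamma b * Real.Gamma b / (rpoch (2*b) n * Real.Gamma (2*b))
        ≤ Real.Gamma b * Real.Gamma b / Real.Gamma (2*b) := by
      rw [div_le_div_iff₀ (by positivity) (by positivity)]
      nlinarith [mul_le_mul_of_nonneg_right hmono
        (le_of_lt (by positivity : (0:ℝ) < Real.Gamma b * Real.Gamma b * Real.Gamma (2*b)))]
    have hc : (0:ℝ) ≤ |rpoch a n| / n.factorial * z ^ n :=
      mul_nonneg (by positivity) (pow_nonneg hz0.le n)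
    exact mul_le_mul_of_nonneg_left hB hc
  have hswap := integral_tsum_of_summable_integral_norm
    (F := F) (μ := volume.restrict (Set.Ioo (0:ℝ) 1)) hint hsum
  have hleft : ∫ t in Set.Ioo (0:ℝ) 1, (1 - z*t) ^ (-a) * (t ^ (b-1) * (1-t) ^ (b-1))
      = ∫ t in Set.Ioo (0:ℝ) 1, ∑' n, F n t :=
    setIntegral_congr_fun measurableSet_Ioo fun t ht => ((hpt t ht).tsum_eq).symm
  rw [hleft, ← hswap]
  rw [show (fun n => ∫ t in Set.Ioo (0:ℝ) 1, F n t)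
      = fun n : ℕ => (rpoch a n * rpoch b n / (rpoch (2*b) n * n.factorial) * z ^ n)
          * (Real.Gamma b ^ 2 / Real.Gamma (2*b)) from ?_, tsum_mul_right]
  funext n
  rw [hval n, hG n]
  have hp2 := (rpoch_pos (by linarith : (0:ℝ) < 2*b) n).ne'
  have hG2 := (Real.Gamma_pos_of_pos (by linarith : (0:ℝ) < 2*b)).ne'
  have hfact : ((n.factorial:ℝ)) ≠ 0 := by positivity
  field_simp

end Aux

/-- Gauss' hypergeometric series `₂F₁` (real). -/
noncomputable def hyp2F1 (a b c z : ℝ) : ℝ :=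
  ∑' n : ℕ, rpoch a n * rpoch b n / (rpoch c n * (n.factorial : ℝ)) * z ^ n

/-- Period integral over `[λ, 1]` of `dx/y` for the superelliptic curve
`y^{2r} = x^{p+q−r}(x−1)^{2r−p}(x−λ)^{2r−p}` (up to a constant phase). -/
theorem statement9 (β₁ β₂ lam : ℝ) (hβ₂ : 0 < β₂)
    (hl0 : 0 < lam) (hl1 : lam < 1) :
    ∫ x in Set.Ioo lam 1,
        x ^ (-(β₁ + β₂ - 1 / 2)) * (1 - x) ^ (β₂ - 1) * (x - lam) ^ (β₂ - 1) =
      (1 - lam) ^ (2 * β₂ - 1) *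
        (Real.Gamma β₂ ^ (2 : ℕ) / Real.Gamma (2 * β₂)) *
        hyp2F1 (β₁ + β₂ - 1 / 2) β₂ (2 * β₂) (1 - lam) := by
  set a : ℝ := β₁ + β₂ - 1 / 2 with ha
  set b : ℝ := β₂ with hb
  set z : ℝ := 1 - lam with hz
  have hz0 : 0 < z := by rw [hz]; linarith
  have hz1 : z < 1 := by rw [hz]; linarith
  set f : ℝ → ℝ := fun x => x ^ (-a) * (1-x) ^ (b-1) * (x - lam) ^ (b-1) with hf
  have h1 : (∫ x in Set.Ioo lam 1, f x) = ∫ x in lam..1, f x := by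
    rw [intervalIntegral.integral_of_le hl1.le, integral_Ioc_eq_integral_Ioo]
  have h2 := intervalIntegral.integral_comp_mul_add (a := 0) (b := 1) (f := f)
    (c := -z) (by simpa using hz0.ne') 1
  rw [show -z*0+1 = (1:ℝ) by ring, show -z*1+1 = lam by rw [hz]; ring,
    intervalIntegral.integral_symm lam 1, smul_neg, smul_eq_mul] at h2
  have h3 : (∫ x in lam..1, f x) = z * ∫ t in (0:ℝ)..1, f (-z*t+1) := by
    rw [h2]
    field_simp
  have h4 : (∫ t in (0:ℝ)..1, f (-z*t+1)) = ∫ t in Set.Ioo (0:ℝ) 1, f (-z*t+1) := by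
    rw [intervalIntegral.integral_of_le zero_le_one, integral_Ioc_eq_integral_Ioo]
  have h5 : (∫ t in Set.Ioo (0:ℝ) 1, f (-z*t+1))
      = ∫ t in Set.Ioo (0:ℝ) 1,
          z ^ (2*b-2) * ((1 - z*t) ^ (-a) * (t ^ (b-1) * (1-t) ^ (b-1))) := by
    refine setIntegral_congr_fun measurableSet_Ioo fun t ht => ?_
    have ht0 := ht.1
    have ht1 := ht.2
    rw [hf]
    simp only
    rw [show (1:ℝ) - (-z*t+1) = z*t by ring, show -z*t+1 - lam = z*(1-t) by rw [hz]; ring,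
      show -z*t+1 = 1 - z*t by ring,
      Real.mul_rpow hz0.le ht0.le, Real.mul_rpow hz0.le (by linarith : (0:ℝ) ≤ 1 - t),
      show (2*b-2 : ℝ) = (b-1)+(b-1) by ring, Real.rpow_add hz0]
    ring
  rw [h1, h3, h4, h5, MeasureTheory.integral_const_mul, J_eval a b z hβ₂ hz0 hz1]
  rw [hyp2F1]
  have hzz2 : z * z ^ (2*b-2) = z ^ (2*b-1) := by
    rw [show (2*b-1:ℝ) = 1 + (2*b-2) by ring, Real.rpow_add hz0, Real.rpow_one]
  calc z * (z ^ (2*b-2) * ((∑' n : ℕ, rpoch a n * rpoch b n / (rpoch (2*b) n * n.factorial) * z ^ n)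
          * (Real.Gamma b ^ 2 / Real.Gamma (2*b))))
      = (z * z ^ (2*b-2)) * (Real.Gamma b ^ 2 / Real.Gamma (2*b))
        * (∑' n : ℕ, rpoch a n * rpoch b n / (rpoch (2*b) n * n.factorial) * z ^ n) := by ring
    _ = z ^ (2*b-1) * (Real.Gamma b ^ (2:ℕ) / Real.Gamma (2*b))
        * (∑' n : ℕ, rpoch a n * rpoch b n / (rpoch (2*b) n * n.factorial) * z ^ n) := by
          rw [hzz2]
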